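/- arXiv:2107.03161 — 3 statements merged into one kernel-verified Lean document; each statement's English description precedes it below -/
import Mathlib

section
/- The monoid of magic labellings of the complete graph K4 is free with three generators: every magic labelling (x1,...,x6) ∈ ℕ^6 of K4 can be written uniquely as k1·α1 + k2·α2 + k3·α3 with k1,k2,k3 ∈ ℕ, where α1 = e2+e4, α2 = e1+e3, α3 = e5+e6. Conversely, every such nonnegative combination is a magic labelling of K4. -/
/-- A magic labelling of K4: edges a1,a2,a3,a4 form a 4-cycle, a5,a6 are diagonals. -/
def MagicK4 (x : Fin 6 → ℕ) : Prop :=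
  ∃ s : ℕ, x 0 + x 3 + x 4 = s ∧ x 0 + x 1 + x 5 = s ∧
    x 1 + x 2 + x 4 = s ∧ x 2 + x 3 + x 5 = s

def alpha1 : Fin 6 → ℕ := ![0, 1, 0, 1, 0, 0]
def alpha2 : Fin 6 → ℕ := ![1, 0, 1, 0, 0, 0]
def alpha3 : Fin 6 → ℕ := ![0, 0, 0, 0, 1, 1]

lemma cons_val_five {α : Type*} (x0 x1 x2 x3 x4 x5 : α) :
    ![x0, x1, x2, x3, x4, x5] (5 : Fin 6) = x5 := rfl

lemma comb (k1 k2 k3 : ℕ) :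
    k1 • alpha1 + k2 • alpha2 + k3 • alpha3 = ![k2, k1, k2, k1, k3, k3] := by
  funext i
  fin_cases i <;> simp [alpha1, alpha2, alpha3, cons_val_five]

theorem stmt_0 :
    (∀ x : Fin 6 → ℕ, MagicK4 x →
      ∃! k : ℕ × ℕ × ℕ, x = k.1 • alpha1 + k.2.1 • alpha2 + k.2.2 • alpha3) ∧
    (∀ k1 k2 k3 : ℕ, MagicK4 (k1 • alpha1 + k2 • alpha2 + k3 • alpha3)) := by
  constructor
  · intro x ⟨s, h1, h2, h3, h4⟩
    refine ⟨(x 1, x 0, x 4), ?_, ?_⟩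
    · show x = _
      rw [comb]
      funext i
      fin_cases i <;> simp [cons_val_five] <;> omega
    · rintro ⟨a, b, c⟩ hk
      rw [comb] at hk
      have h0 := congrFun hk 0
      have h1' := congrFun hk 1
      have h4' := congrFun hk 4
      simp at h0 h1' h4'
      simp [h0, h1', h4']
  · intro k1 k2 k3
    rw [comb]
    exact ⟨k1 + k2 + k3, by simp [cons_val_five]; ring, by simp [cons_val_five]; try ring,
      by simp [cons_val_five]; try ring, by simp [cons_val_five]; try ring⟩
end

section
/- For every s ∈ ℕ, the number of magic labellings of the complete graph K4 with magic sum s equals (s+1)(s+2)/2 = C(s+2,2). -/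
lemma cons_val_five' {α : Type*} (a b c d e g : α) : ![a, b, c, d, e, g] (5 : Fin 6) = g := rfl

/-- The number of magic labellings of K4 with magic sum `s` equals
`C(s+2,2) = (s+1)(s+2)/2`. -/
theorem stmt_2 (s : ℕ) :
    Set.ncard {x : Fin 6 → ℕ |
        x 0 + x 3 + x 4 = s ∧ x 0 + x 1 + x 5 = s ∧
        x 1 + x 2 + x 4 = s ∧ x 2 + x 3 + x 5 = s} = (s + 2).choose 2 ∧
    (s + 2).choose 2 = (s + 1) * (s + 2) / 2 := by
  have hch : (s + 2).choose 2 = (s + 1) * (s + 2) / 2 := by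
    rw [Nat.choose_two_right, show s + 2 - 1 = s + 1 from rfl, Nat.mul_comm]
  refine ⟨?_, hch⟩
  set f : (_ : ℕ) × ℕ → (Fin 6 → ℕ) :=
    fun p => ![p.1, p.2, p.1, p.2, s - p.1 - p.2, s - p.1 - p.2] with hf
  set T : Finset ((_ : ℕ) × ℕ) :=
    (Finset.range (s + 1)).sigma (fun a => Finset.range (s + 1 - a)) with hT
  have hset : {x : Fin 6 → ℕ |
      x 0 + x 3 + x 4 = s ∧ x 0 + x 1 + x 5 = s ∧
      x 1 + x 2 + x 4 = s ∧ x 2 + x 3 + x 5 = s} = ↑(T.image f) := by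
    ext x
    simp only [Set.mem_setOf_eq, Finset.coe_image, Set.mem_image, Finset.mem_coe,
      hT, Finset.mem_sigma, Finset.mem_range]
    constructor
    · rintro ⟨h1, h2, h3, h4⟩
      refine ⟨⟨x 0, x 1⟩, ⟨(by omega : x 0 < s + 1), (by omega : x 1 < s + 1 - x 0)⟩, ?_⟩
      funext i
      fin_cases i <;> simp [hf, cons_val_five'] <;> omega
    · rintro ⟨p, ⟨hp1, hp2⟩, rfl⟩
      simp [hf, cons_val_five']
      omega
  have hinj : Function.Injective f := by
    intro a b hab
    have h0 := congrFun hab 0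
    have h1 := congrFun hab 1
    simp only [hf, Matrix.cons_val_zero, Matrix.cons_val_one, Matrix.head_cons] at h0 h1
    exact Sigma.ext h0 (by simpa using h1)
  rw [hset, Set.ncard_coe_finset, Finset.card_image_of_injective _ hinj, hT,
    Finset.card_sigma]
  simp only [Finset.card_range]
  have h1 : ∑ a ∈ Finset.range (s + 2), (s + 1 - a) = ∑ a ∈ Finset.range (s + 2), a := by
    simpa using Finset.sum_range_reflect (fun j => j) (s + 2)
  have h2 : ∑ a ∈ Finset.range (s + 2), (s + 1 - a)
      = ∑ a ∈ Finset.range (s + 1), (s + 1 - a) := by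
    rw [Finset.sum_range_succ]; simp
  rw [← h2, h1, Finset.sum_range_id, hch, show s + 2 - 1 = s + 1 from rfl, Nat.mul_comm]
end

section
/- The real solution space S_ℝ(G2) = {(x1,...,x9,s) ∈ ℝ^10 : x4+x6+x8=s, x1+x2+x7=s, x4+x5+x9=s, x2+x3+x8=s, x5+x6+x7=s, x1+x3+x9=s} has dimension 4, and the four vectors β1 = e1+e5+e8, β2 = e2+e6+e9, β3 = e3+e4+e7, β4 = e7+e8+e9 (each with magic sum 1) are linearly independent and their x-parts span the projection of this space to the x-coordinates; in particular every magic ℝ-labelling of G2 is a unique real linear combination of β1, β2, β3, β4. -/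
/-- Magic ℝ-labelling of the graph G2 with magic sum `s`. -/
def MagicG2R (x : Fin 9 → ℝ) (s : ℝ) : Prop :=
  x 3 + x 5 + x 7 = s ∧ x 0 + x 1 + x 6 = s ∧ x 3 + x 4 + x 8 = s ∧
  x 1 + x 2 + x 7 = s ∧ x 4 + x 5 + x 6 = s ∧ x 0 + x 2 + x 8 = s

def beta1R : Fin 9 → ℝ := ![1, 0, 0, 0, 1, 0, 0, 1, 0]
def beta2R : Fin 9 → ℝ := ![0, 1, 0, 0, 0, 1, 0, 0, 1]
def beta3R : Fin 9 → ℝ := ![0, 0, 1, 1, 0, 0, 1, 0, 0]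
def beta4R : Fin 9 → ℝ := ![0, 0, 0, 0, 0, 0, 1, 1, 1]

def gam : Fin 4 → (Fin 10 → ℝ) :=
  ![![1, 0, 0, 0, 1, 0, 0, 1, 0, 1],
    ![0, 1, 0, 0, 0, 1, 0, 0, 1, 1],
    ![0, 0, 1, 1, 0, 0, 1, 0, 0, 1],
    ![0, 0, 0, 0, 0, 0, 1, 1, 1, 1]]

def Tmod : Submodule ℝ (Fin 10 → ℝ) where
  carrier := {v | MagicG2R (fun i : Fin 9 => v i.castSucc) (v 9)}
  add_mem' := by
    rintro a b ⟨h1,h2,h3,h4,h5,h6⟩ ⟨g1,g2,g3,g4,g5,g6⟩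
    refine ⟨?_,?_,?_,?_,?_,?_⟩ <;> simp only [Pi.add_apply] <;> dsimp only at * <;> linarith
  zero_mem' := by
    refine ⟨?_,?_,?_,?_,?_,?_⟩ <;> simp
  smul_mem' := by
    rintro c a ⟨h1,h2,h3,h4,h5,h6⟩
    refine ⟨?_,?_,?_,?_,?_,?_⟩ <;> simp only [Pi.smul_apply, smul_eq_mul]
    · linear_combination c * h1
    · linear_combination c * h2
    · linear_combination c * h3
    · linear_combination c * h4
    · linear_combination c * h5
    · linear_combination c * h6

lemma gam_indep : LinearIndependent ℝ gam := by
  rw [Fintype.linearIndependent_iff]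
  intro g hg
  rw [Fin.sum_univ_four] at hg
  have h0 : g 0 * 1 + g 1 * 0 + g 2 * 0 + g 3 * 0 = 0 := congrFun hg 0
  have h1 : g 0 * 0 + g 1 * 1 + g 2 * 0 + g 3 * 0 = 0 := congrFun hg 1
  have h2 : g 0 * 0 + g 1 * 0 + g 2 * 1 + g 3 * 0 = 0 := congrFun hg 2
  have h7 : g 0 * 1 + g 1 * 0 + g 2 * 0 + g 3 * 1 = 0 := congrFun hg 7
  intro i
  fin_cases i
  · show g 0 = 0; linarith
  · show g 1 = 0; linarith
  · show g 2 = 0; linarith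
  · show g 3 = 0; linarith

lemma Tmod_eq : Tmod = Submodule.span ℝ (Set.range gam) := by
  apply le_antisymm
  · intro v hv
    obtain ⟨h1,h2,h3,h4,h5,h6⟩ := hv
    have e1 : v 3 + v 5 + v 7 = v 9 := h1
    have e2 : v 0 + v 1 + v 6 = v 9 := h2
    have e3 : v 3 + v 4 + v 8 = v 9 := h3
    have e4 : v 1 + v 2 + v 7 = v 9 := h4
    have e5 : v 4 + v 5 + v 6 = v 9 := h5
    have e6 : v 0 + v 2 + v 8 = v 9 := h6
    have hv2 : v = v 0 • gam 0 + v 1 • gam 1 + v 2 • gam 2 + (v 6 - v 2) • gam 3 := by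
      funext j
      fin_cases j
      · show v 0 = v 0 * 1 + v 1 * 0 + v 2 * 0 + (v 6 - v 2) * 0; ring
      · show v 1 = v 0 * 0 + v 1 * 1 + v 2 * 0 + (v 6 - v 2) * 0; ring
      · show v 2 = v 0 * 0 + v 1 * 0 + v 2 * 1 + (v 6 - v 2) * 0; ring
      · show v 3 = v 0 * 0 + v 1 * 0 + v 2 * 1 + (v 6 - v 2) * 0; linarith
      · show v 4 = v 0 * 1 + v 1 * 0 + v 2 * 0 + (v 6 - v 2) * 0; linarith
      · show v 5 = v 0 * 0 + v 1 * 1 + v 2 * 0 + (v 6 - v 2) * 0; linarith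
      · show v 6 = v 0 * 0 + v 1 * 0 + v 2 * 1 + (v 6 - v 2) * 1; linarith
      · show v 7 = v 0 * 1 + v 1 * 0 + v 2 * 0 + (v 6 - v 2) * 1; linarith
      · show v 8 = v 0 * 0 + v 1 * 1 + v 2 * 0 + (v 6 - v 2) * 1; linarith
      · show v 9 = v 0 * 1 + v 1 * 1 + v 2 * 1 + (v 6 - v 2) * 1; linarith
    rw [hv2]
    have mem : ∀ i : Fin 4, gam i ∈ Submodule.span ℝ (Set.range gam) :=
      fun i => Submodule.subset_span ⟨i, rfl⟩
    exact Submodule.add_mem _ (Submodule.add_mem _ (Submodule.add_mem _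
      (Submodule.smul_mem _ _ (mem 0)) (Submodule.smul_mem _ _ (mem 1)))
      (Submodule.smul_mem _ _ (mem 2))) (Submodule.smul_mem _ _ (mem 3))
  · rw [Submodule.span_le]
    rintro _ ⟨i, rfl⟩
    fin_cases i
    · refine ⟨?_,?_,?_,?_,?_,?_⟩
      · show (0:ℝ) + 0 + 1 = 1; norm_num
      · show (1:ℝ) + 0 + 0 = 1; norm_num
      · show (0:ℝ) + 1 + 0 = 1; norm_num
      · show (0:ℝ) + 0 + 1 = 1; norm_num
      · show (1:ℝ) + 0 + 0 = 1; norm_num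
      · show (1:ℝ) + 0 + 0 = 1; norm_num
    · refine ⟨?_,?_,?_,?_,?_,?_⟩
      · show (0:ℝ) + 1 + 0 = 1; norm_num
      · show (0:ℝ) + 1 + 0 = 1; norm_num
      · show (0:ℝ) + 0 + 1 = 1; norm_num
      · show (1:ℝ) + 0 + 0 = 1; norm_num
      · show (0:ℝ) + 1 + 0 = 1; norm_num
      · show (0:ℝ) + 0 + 1 = 1; norm_num
    · refine ⟨?_,?_,?_,?_,?_,?_⟩
      · show (1:ℝ) + 0 + 0 = 1; norm_num
      · show (0:ℝ) + 0 + 1 = 1; norm_num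
      · show (1:ℝ) + 0 + 0 = 1; norm_num
      · show (0:ℝ) + 1 + 0 = 1; norm_num
      · show (0:ℝ) + 0 + 1 = 1; norm_num
      · show (0:ℝ) + 1 + 0 = 1; norm_num
    · refine ⟨?_,?_,?_,?_,?_,?_⟩
      · show (0:ℝ) + 0 + 1 = 1; norm_num
      · show (0:ℝ) + 0 + 1 = 1; norm_num
      · show (0:ℝ) + 0 + 1 = 1; norm_num
      · show (0:ℝ) + 0 + 1 = 1; norm_num
      · show (0:ℝ) + 0 + 1 = 1; norm_num
      · show (0:ℝ) + 0 + 1 = 1; norm_num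

theorem stmt_3 :
    (∃ S : Submodule ℝ (Fin 10 → ℝ),
      (S : Set (Fin 10 → ℝ)) =
        {v | MagicG2R (fun i : Fin 9 => v i.castSucc) (v 9)} ∧
      Module.finrank ℝ S = 4) ∧
    LinearIndependent ℝ ![beta1R, beta2R, beta3R, beta4R] ∧
    (∀ x : Fin 9 → ℝ, (∃ s, MagicG2R x s) →
      ∃! k : Fin 4 → ℝ,
        x = k 0 • beta1R + k 1 • beta2R + k 2 • beta3R + k 3 • beta4R) := by
  refine ⟨⟨Tmod, rfl, ?_⟩, ?_, ?_⟩
  · rw [Tmod_eq, finrank_span_eq_card gam_indep]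
    rfl
  · rw [Fintype.linearIndependent_iff]
    intro g hg
    rw [Fin.sum_univ_four] at hg
    have h0 : g 0 * 1 + g 1 * 0 + g 2 * 0 + g 3 * 0 = 0 := congrFun hg 0
    have h1 : g 0 * 0 + g 1 * 1 + g 2 * 0 + g 3 * 0 = 0 := congrFun hg 1
    have h2 : g 0 * 0 + g 1 * 0 + g 2 * 1 + g 3 * 0 = 0 := congrFun hg 2
    have h7 : g 0 * 1 + g 1 * 0 + g 2 * 0 + g 3 * 1 = 0 := congrFun hg 7
    intro i
    fin_cases i
    · show g 0 = 0; linarith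
    · show g 1 = 0; linarith
    · show g 2 = 0; linarith
    · show g 3 = 0; linarith
  · rintro x ⟨s, h1, h2, h3, h4, h5, h6⟩
    refine ⟨![x 0, x 1, x 2, x 6 - x 2], ?_, ?_⟩
    · funext j
      fin_cases j
      · show x 0 = x 0 * 1 + x 1 * 0 + x 2 * 0 + (x 6 - x 2) * 0; ring
      · show x 1 = x 0 * 0 + x 1 * 1 + x 2 * 0 + (x 6 - x 2) * 0; ring
      · show x 2 = x 0 * 0 + x 1 * 0 + x 2 * 1 + (x 6 - x 2) * 0; ring
      · show x 3 = x 0 * 0 + x 1 * 0 + x 2 * 1 + (x 6 - x 2) * 0; linarith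
      · show x 4 = x 0 * 1 + x 1 * 0 + x 2 * 0 + (x 6 - x 2) * 0; linarith
      · show x 5 = x 0 * 0 + x 1 * 1 + x 2 * 0 + (x 6 - x 2) * 0; linarith
      · show x 6 = x 0 * 0 + x 1 * 0 + x 2 * 1 + (x 6 - x 2) * 1; linarith
      · show x 7 = x 0 * 1 + x 1 * 0 + x 2 * 0 + (x 6 - x 2) * 1; linarith
      · show x 8 = x 0 * 0 + x 1 * 1 + x 2 * 0 + (x 6 - x 2) * 1; linarith
    · intro k hk
      have e0 : x 0 = k 0 * 1 + k 1 * 0 + k 2 * 0 + k 3 * 0 := congrFun hk 0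
      have e1 : x 1 = k 0 * 0 + k 1 * 1 + k 2 * 0 + k 3 * 0 := congrFun hk 1
      have e2 : x 2 = k 0 * 0 + k 1 * 0 + k 2 * 1 + k 3 * 0 := congrFun hk 2
      have e6 : x 6 = k 0 * 0 + k 1 * 0 + k 2 * 1 + k 3 * 1 := congrFun hk 6
      funext i
      fin_cases i
      · show k 0 = x 0; linarith
      · show k 1 = x 1; linarith
      · show k 2 = x 2; linarith
      · show k 3 = x 6 - x 2; linarith
end
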